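/- The map h_{ν̄,c̄} : H_{ν̄,c̄} → G_ν̄ determined by ĥ(x̂_β) = x_β, ĥ(ẑ_{δ,n}) = z_{δ,n} and ĥ(ŵ) = 0 is a well-defined surjective group homomorphism whose kernel equals H_{ν̄,c̄} ∩ ℤŵ; moreover, if c_δ(n) ≠ 0 for some δ ∈ S and n ∈ ω, then the kernel equals ℤŵ and is infinite cyclic, so that 0 → ℤ → H_{ν̄,c̄} → G_ν̄ → 0 is a short exact sequence of abelian groups. -/

import Mathlib

set_option autoImplicit false
noncomputable section

open Ordinal Cardinal

/-- A ladder on a limit ordinal `δ`: a strictly increasing cofinal sequence of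
successor ordinals below `δ`. -/
structure IsLadder (δ : Ordinal) (η : ℕ → Ordinal) : Prop where
  strictMono : StrictMono η
  isSucc : ∀ n : ℕ, ∃ α : Ordinal, η n = α + 1
  lt_delta : ∀ n : ℕ, η n < δ
  cofinal : ∀ β < δ, ∃ n : ℕ, β < η n

/-- Conditions (a) and (b) for `k` to witness that the ladder `η` is special. -/
def SpecialCond (η : ℕ → Ordinal) (k : ℕ → ℕ) : Prop :=
  ∀ n : ℕ,
    (∀ i < k (n + 1) - k n, ∀ j < k (n + 1) - k n,
      η (k n + i) + Ordinal.omega0 = η (k n + j) + Ordinal.omega0) ∧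
    η (k n) + Ordinal.omega0 < η (k (n + 1))

/-- A club (closed unbounded) subset of `ω₁`. -/
def IsClubBelowOmega1 (C : Set Ordinal) : Prop :=
  (∀ γ ∈ C, γ < ω₁) ∧
  (∀ α < ω₁, ∃ γ ∈ C, α < γ) ∧
  (∀ δ, δ < ω₁ → δ ≠ 0 → (∀ β < δ, ∃ γ ∈ C, β < γ ∧ γ < δ) → δ ∈ C)

/-- A stationary subset of `ω₁`: one meeting every club. -/
def IsStationaryBelowOmega1 (T : Set Ordinal) : Prop :=
  ∀ C : Set Ordinal, IsClubBelowOmega1 C → (T ∩ C).Nonempty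

/-- The standing hypotheses on the set `S`: a stationary, co-stationary subset of `ω₁`
consisting of limit ordinals of cofinality `ω` divisible by `ω²`. -/
structure GoodS (S : Set Ordinal) : Prop where
  stationary : IsStationaryBelowOmega1 S
  costationary : IsStationaryBelowOmega1 ({α : Ordinal | α < ω₁} \ S)
  lt_omega1 : ∀ δ ∈ S, δ < ω₁
  isLimit : ∀ δ ∈ S, δ ≠ 0 ∧ ∀ a < δ, Order.succ a < δ
  cof_eq : ∀ δ ∈ S, Ordinal.cof δ = Cardinal.aleph0
  omega_sq_dvd : ∀ δ ∈ S, Ordinal.omega0 ^ 2 ∣ δ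

/-- A special ladder system on `S`: for each `δ ∈ S` a special ladder `eta δ`
with witnessing sequence `kk δ`. -/
structure LadderSystem (S : Set Ordinal) where
  eta : Ordinal → ℕ → Ordinal
  kk : Ordinal → ℕ → ℕ
  ladder : ∀ δ ∈ S, IsLadder δ (eta δ)
  kk_pos : ∀ δ ∈ S, 0 < kk δ 0
  kk_mono : ∀ δ ∈ S, StrictMono (kk δ)
  special : ∀ δ ∈ S, SpecialCond (eta δ) (kk δ)

/-- Equality of the ω-ranges of two special ladder systems: `rd(η̄) = rd(ν̄)`. -/
def rdEq (S : Set Ordinal) (L M : LadderSystem S) : Prop :=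
  ∀ δ ∈ S, ∀ n : ℕ,
    L.eta δ (L.kk δ n) + Ordinal.omega0 = M.eta δ (M.kk δ n) + Ordinal.omega0

/-- Index type for the basis of the ambient `ℚ`-vector space `F`. -/
abbrev FIdx : Type 1 := Ordinal ⊕ (Ordinal × ℕ)

/-- The ambient `ℚ`-vector space `F`, with basis `x_β` (β an ordinal) and `y_{δ,n}`. -/
abbrev Fsp : Type 1 := FIdx →₀ ℚ

/-- The basis vector `x_β`. -/
def xgen (β : Ordinal) : Fsp := Finsupp.single (Sum.inl β) 1

/-- The basis vector `y_{δ,n}`. -/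
def ygen (δ : Ordinal) (n : ℕ) : Fsp := Finsupp.single (Sum.inr (δ, n)) 1

/-- The elements `z_{δ,n}`, defined by `z_{δ,0} = y_δ` and
`z_{δ,n+1} = ψ(n)⁻¹ (z_{δ,n} + Σ_{l<tₙ^δ} a_l^{δ,n} x_{η_δ(kₙ^δ+l)})`, equivalently
`ψ(n) z_{δ,n+1} = z_{δ,n} + Σ_{l<tₙ^δ} a_l^{δ,n} x_{η_δ(kₙ^δ+l)}`. -/
def zgen (eta : Ordinal → ℕ → Ordinal) (kk : Ordinal → ℕ → ℕ)
    (a : Ordinal → ℕ → ℕ → ℤ) (ψ : ℕ → ℕ) (δ : Ordinal) : ℕ → Fsp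
  | 0 => ygen δ 0
  | n + 1 => ((ψ n : ℚ))⁻¹ •
      (zgen eta kk a ψ δ n +
        ∑ l ∈ Finset.range (kk δ (n + 1) - kk δ n), a δ n l • xgen (eta δ (kk δ n + l)))

/-- All the data needed to build the group `G_η̄`: a special ladder system together with
the function `ψ` (everywhere nonzero) and the coefficients `a_l^{δ,n}` with
`gcd(a_l^{δ,n} : l < tₙ^δ) = 1`. -/
structure GroupData (S : Set Ordinal) extends LadderSystem S where
  a : Ordinal → ℕ → ℕ → ℤ
  psi : ℕ → ℕ
  psi_ne : ∀ n : ℕ, psi n ≠ 0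
  a_gcd : ∀ δ ∈ S, ∀ n : ℕ, (Finset.range (kk δ (n + 1) - kk δ n)).gcd (a δ n) = 1

/-- The group `G_η̄ ≤ (F,+)`, generated by the `x_β` (β < ω₁) and the `z_{δ,n}` (δ ∈ S). -/
def Ggrp (S : Set Ordinal) (D : GroupData S) : AddSubgroup Fsp :=
  AddSubgroup.closure
    ({f : Fsp | ∃ β < ω₁, f = xgen β} ∪
     {f : Fsp | ∃ δ ∈ S, ∃ n : ℕ, f = zgen D.eta D.kk D.a D.psi δ n})

/-- The `ℚ`-subspace `V_α` spanned by the `x_β` (β < α+ω) and `y_{δ,n}` (δ ∈ S ∩ α). -/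
def Vsp (S : Set Ordinal) (α : Ordinal) : Submodule ℚ Fsp :=
  Submodule.span ℚ
    ({f : Fsp | ∃ β < α + Ordinal.omega0, f = xgen β} ∪
     {f : Fsp | ∃ δ ∈ S, δ < α ∧ ∃ n : ℕ, f = ygen δ n})

/-- The pure closure of `H` in `G`: `{g ∈ G : m • g ∈ H for some nonzero integer m}`. -/
def purify (G H : AddSubgroup Fsp) : AddSubgroup Fsp where
  carrier := {g : Fsp | g ∈ G ∧ ∃ m : ℤ, m ≠ 0 ∧ m • g ∈ H}
  zero_mem' := ⟨G.zero_mem, 1, one_ne_zero, by simpa using H.zero_mem⟩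
  add_mem' := by
    rintro g₁ g₂ ⟨hg₁, m₁, hm₁, h₁⟩ ⟨hg₂, m₂, hm₂, h₂⟩
    refine ⟨G.add_mem hg₁ hg₂, m₁ * m₂, mul_ne_zero hm₁ hm₂, ?_⟩
    rw [smul_add]
    exact H.add_mem (by rw [mul_comm, mul_smul]; exact H.zsmul_mem h₁ _)
      (by rw [mul_smul]; exact H.zsmul_mem h₂ _)
  neg_mem' := by
    rintro g ⟨hg, m, hm, h⟩
    exact ⟨G.neg_mem hg, m, hm, by simpa using H.neg_mem h⟩

/-- The canonical filtration `G_η̄^α`: the pure closure in `G_η̄` of `G_η̄ ∩ V_α`. -/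
def Gfil (S : Set Ordinal) (D : GroupData S) (α : Ordinal) : AddSubgroup Fsp :=
  purify (Ggrp S D) ((Vsp S α).toAddSubgroup ⊓ Ggrp S D)

/-- `H` is a direct summand of `G` (both viewed as subgroups of the ambient group). -/
def IsDirectSummandIn (H G : AddSubgroup Fsp) : Prop :=
  H ≤ G ∧ ∃ K : AddSubgroup Fsp, K ≤ G ∧ H ⊓ K = ⊥ ∧ H ⊔ K = G


/-- Index type for the basis of the ambient `ℚ`-vector space `F'` (with the extra vector `ŵ`). -/
abbrev FIdx' : Type 1 := Unit ⊕ FIdx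

/-- The ambient `ℚ`-vector space `F'`, with basis `ŵ`, `x̂_β` and `ŷ_{δ,n}`. -/
abbrev Fsp' : Type 1 := FIdx' →₀ ℚ

/-- The basis vector `ŵ`. -/
def what : Fsp' := Finsupp.single (Sum.inl ()) 1

/-- The basis vector `x̂_β`. -/
def xhat (β : Ordinal) : Fsp' := Finsupp.single (Sum.inr (Sum.inl β)) 1

/-- The basis vector `ŷ_{δ,n}`. -/
def yhat (δ : Ordinal) (n : ℕ) : Fsp' := Finsupp.single (Sum.inr (Sum.inr (δ, n))) 1

/-- The elements `ẑ_{δ,n}`, with `ẑ_{δ,0} = ŷ_δ` and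
`n! ẑ_{δ,n+1} = ẑ_{δ,n} + Σ_{l<tₙ^δ} a_l^{δ,n} x̂_{ν_δ(kₙ^δ+l)} + c_δ(n) ŵ`. -/
def zhat (eta : Ordinal → ℕ → Ordinal) (kk : Ordinal → ℕ → ℕ)
    (a : Ordinal → ℕ → ℕ → ℤ) (c : Ordinal → ℕ → Fin 2) (δ : Ordinal) : ℕ → Fsp'
  | 0 => yhat δ 0
  | n + 1 => ((Nat.factorial n : ℚ))⁻¹ •
      (zhat eta kk a c δ n +
        (∑ l ∈ Finset.range (kk δ (n + 1) - kk δ n), a δ n l • xhat (eta δ (kk δ n + l))) +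
        ((c δ n : ℕ) : ℚ) • what)

/-- The group `H_{ν̄,c̄} ≤ (F',+)`, generated by the `x̂_β` (β < ω₁) and `ẑ_{δ,n}` (δ ∈ S). -/
def Hgrp (S : Set Ordinal) (D : GroupData S) (c : Ordinal → ℕ → Fin 2) : AddSubgroup Fsp' :=
  AddSubgroup.closure
    ({f : Fsp' | ∃ β < ω₁, f = xhat β} ∪
     {f : Fsp' | ∃ δ ∈ S, ∃ n : ℕ, f = zhat D.eta D.kk D.a c δ n})



/-- The projection `F' → F` killing `ŵ` and sending `x̂ ↦ x`, `ŷ ↦ y`;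
defined coefficientwise by precomposition with `Sum.inr`. -/
def pim : Fsp' →+ Fsp where
  toFun g := Finsupp.comapDomain Sum.inr g Sum.inr_injective.injOn
  map_zero' := by ext j; simp [Finsupp.comapDomain_apply]
  map_add' g₁ g₂ := by ext j; simp [Finsupp.comapDomain_apply]

@[simp] lemma pim_apply (g : Fsp') (j : FIdx) : pim g j = g (Sum.inr j) :=
  Finsupp.comapDomain_apply _ _ _ _

lemma pim_smul (q : ℚ) (g : Fsp') : pim (q • g) = q • pim g := by
  ext j; simp

@[simp] lemma pim_xhat (β : Ordinal) : pim (xhat β) = xgen β := by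
  ext j; simp [xhat, xgen, Finsupp.single_apply]

@[simp] lemma pim_yhat (δ : Ordinal) (n : ℕ) : pim (yhat δ n) = ygen δ n := by
  ext j; simp [yhat, ygen, Finsupp.single_apply]

@[simp] lemma pim_what : pim what = 0 := by
  ext j; simp [what, Finsupp.single_apply]

lemma pim_zhat (eta : Ordinal → ℕ → Ordinal) (kk : Ordinal → ℕ → ℕ)
    (a : Ordinal → ℕ → ℕ → ℤ) (c : Ordinal → ℕ → Fin 2) (δ : Ordinal) (n : ℕ) :
    pim (zhat eta kk a c δ n) = zgen eta kk a Nat.factorial δ n := by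
  induction n with
  | zero => simp [zhat, zgen]
  | succ n ih =>
      rw [zhat, zgen, pim_smul]
      congr 1
      rw [map_add, map_add, ih, map_sum]
      simp only [map_zsmul, pim_xhat, pim_smul, pim_what, smul_zero, add_zero]





/-- `P n = ∏_{j<n} j!`. -/
def Pn (n : ℕ) : ℕ := ∏ j ∈ Finset.range n, Nat.factorial j

lemma Pn_pos (n : ℕ) : 0 < Pn n := Finset.prod_pos fun j _ => Nat.factorial_pos j

lemma Pn_ne (n : ℕ) : ((Pn n : ℚ)) ≠ 0 := by
  exact_mod_cast (Pn_pos n).ne'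

@[simp] lemma Pn_zero : Pn 0 = 1 := rfl

lemma Pn_succ (n : ℕ) : Pn (n + 1) = Pn n * Nat.factorial n := Finset.prod_range_succ _ _

/-- `R n i = ∏_{n ≤ j < i} j!`, so that `P n * R n i = P i` for `n ≤ i`. -/
def Rn (n i : ℕ) : ℕ := ∏ j ∈ Finset.Ico n i, Nat.factorial j

lemma Pn_mul_Rn {n i : ℕ} (h : n ≤ i) : Pn n * Rn n i = Pn i :=
  Finset.prod_range_mul_prod_Ico _ h

/-- `T c δ n = Σ_{i<n} P i · c δ i`, the numerator of the `ŵ`-coefficient of `ẑ_{δ,n}`. -/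
def Tn (c : Ordinal → ℕ → Fin 2) (δ : Ordinal) (n : ℕ) : ℤ :=
  ∑ i ∈ Finset.range n, (Pn i : ℤ) * ((c δ i : ℕ) : ℤ)

lemma zhat_apply_w (eta : Ordinal → ℕ → Ordinal) (kk : Ordinal → ℕ → ℕ)
    (a : Ordinal → ℕ → ℕ → ℤ) (c : Ordinal → ℕ → Fin 2) (δ : Ordinal) (n : ℕ) :
    zhat eta kk a c δ n (Sum.inl ()) = (Tn c δ n : ℚ) / (Pn n : ℚ) := by
  induction n with
  | zero => simp [zhat, yhat, Tn, Finsupp.single_apply]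
  | succ n ih =>
      rw [zhat]
      rw [Finsupp.smul_apply, Finsupp.add_apply, Finsupp.add_apply, ih]
      have hx : (∑ l ∈ Finset.range (kk δ (n + 1) - kk δ n),
          a δ n l • xhat (eta δ (kk δ n + l))) (Sum.inl ()) = 0 := by
        rw [Finsupp.finset_sum_apply]
        refine Finset.sum_eq_zero fun l _ => ?_
        simp [xhat, Finsupp.single_apply]
      rw [hx, add_zero]
      have hw : (((c δ n : ℕ) : ℚ) • what) (Sum.inl ()) = ((c δ n : ℕ) : ℚ) := by
        simp [what]
      rw [hw]
      have hT : (Tn c δ (n + 1) : ℚ) = (Tn c δ n : ℚ) + (Pn n : ℚ) * ((c δ n : ℕ) : ℚ) := by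
        unfold Tn; rw [Finset.sum_range_succ]; push_cast; ring
      have hP : (Pn (n + 1) : ℚ) = (Pn n : ℚ) * (Nat.factorial n : ℚ) := by
        rw [Pn_succ]; push_cast; ring
      rw [hT, hP]
      have h1 : (Nat.factorial n : ℚ) ≠ 0 := by exact_mod_cast (Nat.factorial_pos n).ne'
      have h2 : (Pn n : ℚ) ≠ 0 := Pn_ne n
      rw [_root_.smul_eq_mul]
      field_simp

lemma zhat_apply_y (eta : Ordinal → ℕ → Ordinal) (kk : Ordinal → ℕ → ℕ)
    (a : Ordinal → ℕ → ℕ → ℤ) (c : Ordinal → ℕ → Fin 2) (δ : Ordinal) (n : ℕ)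
    (p : Ordinal × ℕ) :
    zhat eta kk a c δ n (Sum.inr (Sum.inr p)) = if p = (δ, 0) then ((Pn n : ℚ))⁻¹ else 0 := by
  induction n with
  | zero =>
      simp only [zhat, yhat, Pn_zero, Nat.cast_one, inv_one]
      rw [Finsupp.single_apply]
      by_cases h : p = (δ, 0)
      · simp [h]
      · simp [h, Ne.symm h]
  | succ n ih =>
      rw [zhat]
      rw [Finsupp.smul_apply, Finsupp.add_apply, Finsupp.add_apply, ih]
      have hx : (∑ l ∈ Finset.range (kk δ (n + 1) - kk δ n),
          a δ n l • xhat (eta δ (kk δ n + l))) (Sum.inr (Sum.inr p)) = 0 := by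
        rw [Finsupp.finset_sum_apply]
        refine Finset.sum_eq_zero fun l _ => ?_
        simp [xhat, Finsupp.single_apply]
      have hw : (((c δ n : ℕ) : ℚ) • what) (Sum.inr (Sum.inr p)) = 0 := by
        simp [what, Finsupp.single_apply]
      rw [hx, hw, add_zero, add_zero]
      have hP : (Pn (n + 1) : ℚ) = (Pn n : ℚ) * (Nat.factorial n : ℚ) := by
        rw [Pn_succ]; push_cast; ring
      by_cases h : p = (δ, 0) <;> simp only [h, if_true, if_false]
      · rw [hP, mul_inv, _root_.smul_eq_mul]; ring
      · simp [h, Ne.symm h]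



lemma sum_int_cast17 {ι : Type*} (s : Finset ι) (f : ι → ℚ)
    (h : ∀ p ∈ s, ∃ k : ℤ, f p = (k : ℚ)) : ∃ k : ℤ, ∑ p ∈ s, f p = (k : ℚ) := by
  classical
  choose! k hk using h
  exact ⟨∑ p ∈ s, k p, by rw [Finset.sum_congr rfl hk, Int.cast_sum]⟩

lemma fiber_int17 {ι : Type*} (s : Finset ι) (m : ι → ℤ) (nn : ι → ℕ) (cc : ℕ → ℤ)
    (h0 : ∑ p ∈ s, (m p : ℚ) / (Pn (nn p) : ℚ) = 0) :
    ∃ k : ℤ, ∑ p ∈ s, (m p : ℚ) *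
      ((∑ i ∈ Finset.range (nn p), (Pn i : ℤ) * cc i : ℤ) : ℚ) / (Pn (nn p) : ℚ) = (k : ℚ) := by
  classical
  set N := s.sup nn with hN
  have key : ∀ p ∈ s, (m p : ℚ) *
      ((∑ i ∈ Finset.range (nn p), (Pn i : ℤ) * cc i : ℤ) : ℚ) / (Pn (nn p) : ℚ)
      = ((m p : ℚ) / (Pn (nn p) : ℚ)) * ((∑ i ∈ Finset.range N, (Pn i : ℤ) * cc i : ℤ) : ℚ)
        - ((m p * ∑ i ∈ Finset.Ico (nn p) N, (Rn (nn p) i : ℤ) * cc i : ℤ) : ℚ) := by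
    intro p hp
    have hn : nn p ≤ N := Finset.le_sup hp
    have hsplit : (∑ i ∈ Finset.range N, (Pn i : ℤ) * cc i)
        = (∑ i ∈ Finset.range (nn p), (Pn i : ℤ) * cc i)
          + ∑ i ∈ Finset.Ico (nn p) N, (Pn i : ℤ) * cc i :=
      (Finset.sum_range_add_sum_Ico _ hn).symm
    have hcast : ((∑ i ∈ Finset.range (nn p), (Pn i : ℤ) * cc i : ℤ) : ℚ)
        = ((∑ i ∈ Finset.range N, (Pn i : ℤ) * cc i : ℤ) : ℚ)
          - ((∑ i ∈ Finset.Ico (nn p) N, (Pn i : ℤ) * cc i : ℤ) : ℚ) := by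
      rw [hsplit]; push_cast; ring
    have hdiv : ((∑ i ∈ Finset.Ico (nn p) N, (Pn i : ℤ) * cc i : ℤ) : ℚ) / (Pn (nn p) : ℚ)
        = ((∑ i ∈ Finset.Ico (nn p) N, (Rn (nn p) i : ℤ) * cc i : ℤ) : ℚ) := by
      push_cast
      rw [Finset.sum_div]
      refine Finset.sum_congr rfl fun i hi => ?_
      have hni : nn p ≤ i := (Finset.mem_Ico.mp hi).1
      have hPR : (Pn i : ℚ) = (Pn (nn p) : ℚ) * (Rn (nn p) i : ℚ) := by
        exact_mod_cast congrArg (Nat.cast : ℕ → ℚ) (Pn_mul_Rn hni).symm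
      rw [hPR, mul_assoc, mul_div_cancel_left₀ _ (Pn_ne _)]
    rw [hcast, _root_.mul_sub, sub_div]
    congr 1
    · ring
    · rw [mul_div_assoc, hdiv]; push_cast; ring
  refine ⟨-∑ p ∈ s, m p * ∑ i ∈ Finset.Ico (nn p) N, (Rn (nn p) i : ℤ) * cc i, ?_⟩
  rw [Finset.sum_congr rfl key, Finset.sum_sub_distrib, ← Finset.sum_mul, h0, zero_mul, _root_.zero_sub]
  push_cast
  ring

lemma mem_H_decomp17 (S : Set Ordinal) (D : GroupData S) (c : Ordinal → ℕ → Fin 2)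
    {g : Fsp'} (hg : g ∈ Hgrp S D c) :
    ∃ (t : Finset (Ordinal × ℕ)) (m : Ordinal × ℕ → ℤ) (x : Fsp'),
      x (Sum.inl ()) = 0 ∧ (∀ p : Ordinal × ℕ, x (Sum.inr (Sum.inr p)) = 0) ∧
      g = x + ∑ p ∈ t, m p • zhat D.eta D.kk D.a c p.1 p.2 := by
  classical
  induction hg using AddSubgroup.closure_induction with
  | mem f hf =>
      rcases hf with ⟨β, _, rfl⟩ | ⟨δ, _, n, rfl⟩
      · exact ⟨∅, 0, xhat β, by simp [xhat, Finsupp.single_apply],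
          fun p => by simp [xhat, Finsupp.single_apply], by simp⟩
      · exact ⟨{(δ, n)}, fun _ => 1, 0, rfl, fun p => rfl, by simp⟩
  | zero => exact ⟨∅, 0, 0, rfl, fun p => rfl, by simp⟩
  | add g₁ g₂ h₁ h₂ ih₁ ih₂ =>
      obtain ⟨t₁, m₁, x₁, hx₁w, hx₁y, rfl⟩ := ih₁
      obtain ⟨t₂, m₂, x₂, hx₂w, hx₂y, rfl⟩ := ih₂
      refine ⟨t₁ ∪ t₂, fun p => (if p ∈ t₁ then m₁ p else 0) + (if p ∈ t₂ then m₂ p else 0),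
        x₁ + x₂, by simp [hx₁w, hx₂w], fun p => by simp [hx₁y p, hx₂y p], ?_⟩
      have e1 : ∀ (t' : Finset (Ordinal × ℕ)) (m : Ordinal × ℕ → ℤ), t' ⊆ t₁ ∪ t₂ →
          (∑ p ∈ t₁ ∪ t₂, (if p ∈ t' then m p else 0) • zhat D.eta D.kk D.a c p.1 p.2)
            = ∑ p ∈ t', m p • zhat D.eta D.kk D.a c p.1 p.2 := by
        intro t' m hsub
        rw [← Finset.sum_subset hsub (fun p _ hnp => by simp [hnp])]
        exact Finset.sum_congr rfl fun p hp => by simp [hp]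
      simp only [add_smul]
      rw [Finset.sum_add_distrib, e1 t₁ m₁ Finset.subset_union_left,
        e1 t₂ m₂ Finset.subset_union_right]
      abel
  | neg g h ih =>
      obtain ⟨t, m, x, hxw, hxy, rfl⟩ := ih
      refine ⟨t, fun p => -m p, -x, by simp [hxw], fun p => by simp [hxy p], ?_⟩
      rw [neg_add, ← Finset.sum_neg_distrib]
      simp [neg_smul]

lemma mem_H_w_int17 (S : Set Ordinal) (D : GroupData S) (c : Ordinal → ℕ → Fin 2)
    {g : Fsp'} (hg : g ∈ Hgrp S D c) (h0 : ∀ j : FIdx, g (Sum.inr j) = 0) :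
    ∃ k : ℤ, g = k • what := by
  classical
  obtain ⟨t, m, x, hxw, hxy, rfl⟩ := mem_H_decomp17 S D c hg
  set g := x + ∑ p ∈ t, m p • zhat D.eta D.kk D.a c p.1 p.2 with hgdef
  -- the ŵ-coefficient of g
  have happly : ∀ i : FIdx', g i = x i + ∑ p ∈ t, (m p : ℚ) * zhat D.eta D.kk D.a c p.1 p.2 i := by
    intro i
    rw [hgdef, Finsupp.add_apply, Finsupp.finset_sum_apply]
    refine congrArg _ (Finset.sum_congr rfl fun p _ => ?_)
    rw [Finsupp.smul_apply, zsmul_eq_mul]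
  -- the fiber conditions
  have hfiber : ∀ δ : Ordinal, ∑ p ∈ t.filter (fun p => p.1 = δ), (m p : ℚ) / (Pn p.2 : ℚ) = 0 := by
    intro δ
    have h1 := happly (Sum.inr (Sum.inr (δ, 0)))
    rw [h0 (Sum.inr (δ, 0)), hxy (δ, 0), zero_add] at h1
    have h2 : ∑ p ∈ t, (m p : ℚ) * zhat D.eta D.kk D.a c p.1 p.2 (Sum.inr (Sum.inr (δ, 0)))
        = ∑ p ∈ t.filter (fun p => p.1 = δ), (m p : ℚ) / (Pn p.2 : ℚ) := by
      rw [Finset.sum_filter]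
      refine Finset.sum_congr rfl fun p _ => ?_
      rw [zhat_apply_y]
      by_cases hp : p.1 = δ
      · simp [hp, Prod.ext_iff, div_eq_mul_inv]
      · simp [hp, Prod.ext_iff, Ne.symm hp]
    rw [← h2, h1]
  -- the ŵ coefficient is an integer
  have hwint : ∃ k : ℤ, g (Sum.inl ()) = (k : ℚ) := by
    rw [happly (Sum.inl ()), hxw, zero_add]
    have hgrp : ∑ p ∈ t, (m p : ℚ) * zhat D.eta D.kk D.a c p.1 p.2 (Sum.inl ())
        = ∑ δ ∈ t.image Prod.fst, ∑ p ∈ t.filter (fun p => p.1 = δ),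
            (m p : ℚ) * zhat D.eta D.kk D.a c p.1 p.2 (Sum.inl ()) :=
      (Finset.sum_fiberwise_of_maps_to (fun p hp => Finset.mem_image_of_mem _ hp) _).symm
    rw [hgrp]
    refine sum_int_cast17 _ _ fun δ _ => ?_
    have := fiber_int17 (t.filter (fun p => p.1 = δ)) m Prod.snd
      (fun i => ((c δ i : ℕ) : ℤ)) (hfiber δ)
    obtain ⟨k, hk⟩ := this
    refine ⟨k, ?_⟩
    rw [← hk]
    refine Finset.sum_congr rfl fun p hp => ?_
    have hp1 : p.1 = δ := (Finset.mem_filter.mp hp).2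
    rw [zhat_apply_w, hp1]
    rw [div_eq_mul_inv, div_eq_mul_inv, mul_assoc]
    rfl
  obtain ⟨k, hk⟩ := hwint
  refine ⟨k, Finsupp.ext fun i => ?_⟩
  match i with
  | Sum.inl () =>
      rw [hk, Finsupp.smul_apply]
      simp [what]
  | Sum.inr j =>
      rw [h0 j, Finsupp.smul_apply]
      simp [what, Finsupp.single_apply]

lemma xhat_mem17 (S : Set Ordinal) (D : GroupData S) (c : Ordinal → ℕ → Fin 2)
    {β : Ordinal} (hβ : β < ω₁) : xhat β ∈ Hgrp S D c :=
  AddSubgroup.subset_closure (Or.inl ⟨β, hβ, rfl⟩)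

lemma zhat_mem17 (S : Set Ordinal) (D : GroupData S) (c : Ordinal → ℕ → Fin 2)
    {δ : Ordinal} (hδ : δ ∈ S) (n : ℕ) : zhat D.eta D.kk D.a c δ n ∈ Hgrp S D c :=
  AddSubgroup.subset_closure (Or.inr ⟨δ, hδ, n, rfl⟩)

lemma pim_mem17 (S : Set Ordinal) (D : GroupData S) (c : Ordinal → ℕ → Fin 2)
    (hpsi : D.psi = Nat.factorial) {g : Fsp'} (hg : g ∈ Hgrp S D c) :
    pim g ∈ Ggrp S D := by
  induction hg using AddSubgroup.closure_induction with
  | mem f hf =>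
      rcases hf with ⟨β, hβ, rfl⟩ | ⟨δ, hδ, n, rfl⟩
      · rw [pim_xhat]; exact AddSubgroup.subset_closure (Or.inl ⟨β, hβ, rfl⟩)
      · rw [pim_zhat, ← hpsi]; exact AddSubgroup.subset_closure (Or.inr ⟨δ, hδ, n, rfl⟩)
  | zero => simpa using (Ggrp S D).zero_mem
  | add a b _ _ ha hb => rw [map_add]; exact AddSubgroup.add_mem _ ha hb
  | neg a _ ha => rw [map_neg]; exact AddSubgroup.neg_mem _ ha

lemma G_le_map17 (S : Set Ordinal) (D : GroupData S) (c : Ordinal → ℕ → Fin 2)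
    (hpsi : D.psi = Nat.factorial) :
    Ggrp S D ≤ AddSubgroup.map pim (Hgrp S D c) := by
  refine (AddSubgroup.closure_le _).mpr ?_
  rintro f (⟨β, hβ, rfl⟩ | ⟨δ, hδ, n, rfl⟩)
  · exact ⟨xhat β, xhat_mem17 S D c hβ, pim_xhat β⟩
  · exact ⟨zhat D.eta D.kk D.a c δ n, zhat_mem17 S D c hδ n, by rw [pim_zhat, ← hpsi]⟩


theorem statement17 (S : Set Ordinal) (hS : GoodS S) (D : GroupData S)
    (hpsi : D.psi = Nat.factorial) (c : Ordinal → ℕ → Fin 2) :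
    ∃ h : ↥(Hgrp S D c) →+ ↥(Ggrp S D),
      (∀ (β : Ordinal), β < ω₁ → ∀ (hmem : xhat β ∈ Hgrp S D c),
        ((h ⟨xhat β, hmem⟩ : ↥(Ggrp S D)) : Fsp) = xgen β) ∧
      (∀ δ ∈ S, ∀ (n : ℕ) (hmem : zhat D.eta D.kk D.a c δ n ∈ Hgrp S D c),
        ((h ⟨zhat D.eta D.kk D.a c δ n, hmem⟩ : ↥(Ggrp S D)) : Fsp)
          = zgen D.eta D.kk D.a D.psi δ n) ∧
      (∀ (g : ↥(Hgrp S D c)) (m : ℤ), (g : Fsp') = m • what → h g = 0) ∧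
      Function.Surjective h ∧
      (∀ g : ↥(Hgrp S D c), (h g = 0 ↔ ∃ m : ℤ, (g : Fsp') = m • what)) ∧
      ((∃ δ ∈ S, ∃ n : ℕ, c δ n ≠ 0) →
        what ∈ Hgrp S D c ∧ Nonempty (↥h.ker ≃+ ℤ)) := by
  classical
  have hmem_pim : ∀ g : Fsp', g ∈ Hgrp S D c → pim g ∈ Ggrp S D :=
    fun g hg => pim_mem17 S D c hpsi hg
  let hmap : ↥(Hgrp S D c) →+ ↥(Ggrp S D) :=
    { toFun := fun g => ⟨pim g.1, hmem_pim g.1 g.2⟩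
      map_zero' := Subtype.ext (map_zero pim)
      map_add' := fun a b => Subtype.ext (map_add pim a.1 b.1) }
  refine ⟨hmap, ?_, ?_, ?_, ?_, ?_, ?_⟩
  · intro β hβ hmem
    exact pim_xhat β
  · intro δ hδ n hmem
    show pim (zhat D.eta D.kk D.a c δ n) = zgen D.eta D.kk D.a D.psi δ n
    rw [pim_zhat, ← hpsi]
  · rintro g mz hg
    apply Subtype.ext
    show pim g.1 = 0
    rw [hg, map_zsmul, pim_what, smul_zero]
  · rintro ⟨y, hy⟩
    obtain ⟨g, hg, hpg⟩ := G_le_map17 S D c hpsi hy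
    exact ⟨⟨g, hg⟩, Subtype.ext hpg⟩
  · intro g
    constructor
    · intro hg0
      have hp : pim g.1 = 0 := congrArg Subtype.val hg0
      have hz : ∀ j : FIdx, (g : Fsp') (Sum.inr j) = 0 := by
        intro j
        have h2 := DFunLike.congr_fun hp j
        rw [pim_apply] at h2
        simpa using h2
      exact mem_H_w_int17 S D c g.2 hz
    · rintro ⟨mz, hm⟩
      apply Subtype.ext
      show pim g.1 = 0
      rw [hm, map_zsmul, pim_what, smul_zero]
  · rintro ⟨δ, hδ, n, hcn⟩
    have hfac : ((Nat.factorial n : ℚ)) ≠ 0 := by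
      exact_mod_cast (Nat.factorial_pos n).ne'
    have hc1 : ((c δ n : ℕ) : ℚ) = 1 := by
      have h2 := (c δ n).isLt
      have h3 : (c δ n).val ≠ 0 := fun h => hcn (Fin.ext h)
      have h4 : (c δ n).val = 1 := by omega
      rw [h4]; norm_num
    have hrec : (Nat.factorial n : ℚ) • zhat D.eta D.kk D.a c δ (n + 1)
        = zhat D.eta D.kk D.a c δ n
          + (∑ l ∈ Finset.range (D.kk δ (n + 1) - D.kk δ n),
              D.a δ n l • xhat (D.eta δ (D.kk δ n + l)))
          + ((c δ n : ℕ) : ℚ) • what := by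
      rw [zhat, smul_inv_smul₀ hfac]
    have hwhat : what = (Nat.factorial n : ℚ) • zhat D.eta D.kk D.a c δ (n + 1)
        - zhat D.eta D.kk D.a c δ n
        - ∑ l ∈ Finset.range (D.kk δ (n + 1) - D.kk δ n),
            D.a δ n l • xhat (D.eta δ (D.kk δ n + l)) := by
      rw [hrec, hc1, one_smul]; abel
    have hw : what ∈ Hgrp S D c := by
      rw [hwhat]
      refine AddSubgroup.sub_mem _ (AddSubgroup.sub_mem _ ?_ (zhat_mem17 S D c hδ n)) ?_
      · have hcast : (Nat.factorial n : ℚ) • zhat D.eta D.kk D.a c δ (n + 1)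
            = (Nat.factorial n : ℤ) • zhat D.eta D.kk D.a c δ (n + 1) := by
          rw [← Int.cast_smul_eq_zsmul ℚ]; norm_num
        rw [hcast]
        exact AddSubgroup.zsmul_mem _ (zhat_mem17 S D c hδ (n + 1)) _
      · refine AddSubgroup.sum_mem _ fun l _ => AddSubgroup.zsmul_mem _ ?_ _
        exact xhat_mem17 S D c (lt_trans ((D.ladder δ hδ).lt_delta _) (hS.lt_omega1 δ hδ))
    refine ⟨hw, ?_⟩
    have hker_mem : ∀ m : ℤ,
        (⟨m • what, AddSubgroup.zsmul_mem _ hw m⟩ : ↥(Hgrp S D c)) ∈ hmap.ker := by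
      intro m
      rw [AddMonoidHom.mem_ker]
      apply Subtype.ext
      show pim (m • what) = 0
      rw [map_zsmul, pim_what, smul_zero]
    let φ : ℤ →+ ↥hmap.ker :=
      { toFun := fun m => ⟨⟨m • what, AddSubgroup.zsmul_mem _ hw m⟩, hker_mem m⟩
        map_zero' := by
          apply Subtype.ext; apply Subtype.ext
          show (0 : ℤ) • what = 0
          rw [zero_smul]
        map_add' := fun m m' => by
          apply Subtype.ext; apply Subtype.ext
          show (m + m') • what = m • what + m' • what
          rw [add_smul] }
    have hbij : Function.Bijective φ := by
      constructor
      · intro m m' he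
        have h3 := congrArg
          (fun g : ↥hmap.ker => ((g : ↥(Hgrp S D c)) : Fsp') (Sum.inl ())) he
        have h2 : (m : ℚ) = (m' : ℚ) := by
          simpa [φ, what, Finsupp.smul_apply, Finsupp.single_eq_same, zsmul_eq_mul] using h3
        exact_mod_cast h2
      · intro g
        have hg0 : hmap g.1 = 0 := AddMonoidHom.mem_ker.mp g.2
        have hp : pim (g.1 : Fsp') = 0 := congrArg Subtype.val hg0
        have hz : ∀ j : FIdx, ((g.1 : ↥(Hgrp S D c)) : Fsp') (Sum.inr j) = 0 := fun j => by
          have h2 := DFunLike.congr_fun hp j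
          rw [pim_apply] at h2; simpa using h2
        obtain ⟨mz, hm⟩ := mem_H_w_int17 S D c g.1.2 hz
        exact ⟨mz, Subtype.ext (Subtype.ext hm.symm)⟩
    exact ⟨(AddEquiv.ofBijective φ hbij).symm⟩


end
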